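/- Let G be a simply sm-factorizable topological group. Then for every continuous function f : G → ℝ there exists a normal admissible subgroup N of G such that f is constant on the coset gN for each g ∈ G. -/

import Mathlib

open Topology TopologicalSpace Pointwise Function Set

def IsCozero {X : Type*} [TopologicalSpace X] (U : Set X) : Prop :=
  ∃ f : X → ℝ, Continuous f ∧ U = f ⁻¹' {x : ℝ | x ≠ 0}

/-- A topological group is simply sm-factorizable if every cozero set is saturated with
respect to some continuous surjective homomorphism onto a separable metrizable topological group. -/
def SimplySMFactorizable (G : Type*) [Group G] [TopologicalSpace G] : Prop :=
  ∀ U : Set G, IsCozero U →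
    ∃ (H : Type) (gH : Group H) (tH : TopologicalSpace H),
      letI := gH
      letI := tH
      IsTopologicalGroup H ∧ SeparableSpace H ∧ MetrizableSpace H ∧
        ∃ π : G →* H, Continuous π ∧ Surjective π ∧ ⇑π ⁻¹' (⇑π '' U) = U

/-- A subset N of a topological group is an admissible subgroup if it is the intersection of a
sequence of open symmetric neighborhoods of the identity with Uₙ₊₁·Uₙ₊₁ ⊆ Uₙ. -/
def IsAdmissible {G : Type*} [Group G] [TopologicalSpace G] (N : Set G) : Prop :=
  ∃ U : ℕ → Set G,
    (∀ n, IsOpen (U n) ∧ (1 : G) ∈ U n ∧ (U n)⁻¹ = U n) ∧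
    (∀ n, U (n + 1) * U (n + 1) ⊆ U n) ∧ N = ⋂ n, U n

/-- In a metrizable topological group there is a sequence of open symmetric neighborhoods of
the identity with `V (n+1) * V (n+1) ⊆ V n` whose intersection is `{1}`. -/
theorem aux9 {H : Type*} [Group H] [TopologicalSpace H] [IsTopologicalGroup H]
    [MetrizableSpace H] :
    ∃ V : ℕ → Set H, (∀ n, IsOpen (V n) ∧ (1:H) ∈ V n ∧ (V n)⁻¹ = V n) ∧
      (∀ n, V (n+1) * V (n+1) ⊆ V n) ∧ (⋂ n, V n) = {1} := by
  obtain ⟨B, hB⟩ := (𝓝 (1:H)).exists_antitone_basis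
  have hBmem : ∀ n, B n ∈ 𝓝 1 := fun n => hB.1.mem_of_mem trivial
  have step : ∀ S : Set H, ∃ T : Set H,
      S ∈ 𝓝 1 → IsOpen T ∧ (1:H) ∈ T ∧ T⁻¹ = T ∧ T * T ⊆ S := by
    intro S
    by_cases hS : S ∈ 𝓝 1
    · obtain ⟨Vo, hVo, h1, hmul⟩ := exists_open_nhds_one_mul_subset hS
      refine ⟨Vo ∩ Vo⁻¹, fun _ => ⟨hVo.inter hVo.inv, ⟨h1, by simpa using h1⟩, ?_, ?_⟩⟩
      · rw [Set.inter_inv, inv_inv, Set.inter_comm]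
      · exact (Set.mul_subset_mul Set.inter_subset_left Set.inter_subset_left).trans hmul
    · exact ⟨∅, fun h => absurd h hS⟩
  choose t ht using step
  set V : ℕ → Set H := fun n => Nat.rec (t (B 0)) (fun n Vn => t (Vn ∩ B (n+1))) n with hV
  have hVs : ∀ n, V (n+1) = t (V n ∩ B (n+1)) := fun n => rfl
  have key : ∀ n, (IsOpen (V n) ∧ (1:H) ∈ V n ∧ (V n)⁻¹ = V n) ∧ V n ⊆ B n := by
    intro n
    induction n with
    | zero =>
      obtain ⟨ho, h1, hsym, hm⟩ := ht (B 0) (hBmem 0)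
      exact ⟨⟨ho, h1, hsym⟩, (Set.subset_mul_left _ h1).trans hm⟩
    | succ n ih =>
      have hnb : V n ∩ B (n+1) ∈ 𝓝 1 :=
        Filter.inter_mem (ih.1.1.mem_nhds ih.1.2.1) (hBmem (n+1))
      obtain ⟨ho, h1, hsym, hm⟩ := ht _ hnb
      rw [← hVs] at ho h1 hsym hm
      exact ⟨⟨ho, h1, hsym⟩,
        ((Set.subset_mul_left _ h1).trans hm).trans Set.inter_subset_right⟩
  have keymul : ∀ n, V (n+1) * V (n+1) ⊆ V n := by
    intro n
    have hnb : V n ∩ B (n+1) ∈ 𝓝 1 :=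
      Filter.inter_mem ((key n).1.1.mem_nhds (key n).1.2.1) (hBmem (n+1))
    have hm := (ht _ hnb).2.2.2
    rw [← hVs] at hm
    exact hm.trans Set.inter_subset_left
  refine ⟨V, fun n => (key n).1, keymul, ?_⟩
  apply Set.Subset.antisymm
  · intro x hx
    simp only [Set.mem_iInter] at hx
    by_contra hx1
    have : ({x}ᶜ : Set H) ∈ 𝓝 1 := compl_singleton_mem_nhds (Ne.symm hx1)
    obtain ⟨n, -, hn⟩ := hB.1.mem_iff.mp this
    exact hn ((key n).2 (hx n)) rfl
  · rintro x rfl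
    exact Set.mem_iInter.2 fun n => (key n).1.2.1

theorem cozero_ball9 {X : Type*} [TopologicalSpace X] (f : X → ℝ) (hf : Continuous f)
    (q : ℝ) (ε : ℝ) : IsCozero (f ⁻¹' {y | dist y q < ε}) := by
  refine ⟨fun x => max (ε - dist (f x) q) 0, ?_, ?_⟩
  · exact (continuous_const.sub ((hf.dist continuous_const))).max continuous_const
  · ext x
    simp only [Set.mem_preimage, Set.mem_setOf_eq]
    constructor
    · intro h
      have : 0 < ε - dist (f x) q := by linarith
      simp [max_eq_left this.le]; linarith
    · intro h
      by_contra hc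
      push_neg at hc
      exact h (max_eq_right (by linarith : ε - dist (f x) q ≤ 0))

theorem sep_rat9 (a b : ℝ) (hab : a ≠ b) :
    ∃ (q : ℚ) (m : ℕ), dist a (q:ℝ) < 1/(m+1) ∧ ¬ dist b (q:ℝ) < 1/(m+1) := by
  have hd : 0 < dist a b := dist_pos.2 hab
  obtain ⟨m, hm⟩ := exists_nat_one_div_lt (half_pos hd)
  obtain ⟨q, hq⟩ := exists_rat_near a (by positivity : (0:ℝ) < 1/(m+1))
  refine ⟨q, m, by rwa [Real.dist_eq], ?_⟩
  intro hb
  rw [Real.dist_eq] at hb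
  have := dist_triangle a q b
  rw [Real.dist_eq, Real.dist_eq, Real.dist_eq] at this
  rw [abs_sub_comm b] at hb
  have hd' : dist a b = |a - b| := Real.dist_eq a b
  linarith

/-- In a simply sm-factorizable topological group, every continuous real-valued function is
constant on the cosets of some normal admissible subgroup. -/
theorem statement9 (G : Type*) [Group G] [TopologicalSpace G] [IsTopologicalGroup G]
    (hG : SimplySMFactorizable G) :
    ∀ f : G → ℝ, Continuous f →
      ∃ N : Subgroup G, N.Normal ∧ IsAdmissible (N : Set G) ∧
        ∀ g : G, ∀ x ∈ N, f (g * x) = f g := by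
  intro f hf
  classical
  let e : ℚ × ℕ ≃ ℕ := Denumerable.eqv (ℚ × ℕ)
  set W : ℕ → Set G := fun i =>
    f ⁻¹' {y | dist y (((e.symm i).1 : ℝ)) < 1/(((e.symm i).2 : ℝ)+1)} with hW
  have hcoz : ∀ i, IsCozero (W i) := fun i => cozero_ball9 f hf _ _
  choose H gH tH hTG hSep hMet π hπc hπs hπsat using fun i => hG (W i) (hcoz i)
  have hVex : ∀ i, ∃ V : ℕ → Set (H i),
      (∀ n, IsOpen (V n) ∧ (1 : H i) ∈ V n ∧ (V n)⁻¹ = V n) ∧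
      (∀ n, V (n+1) * V (n+1) ⊆ V n) ∧ (⋂ n, V n) = {1} := fun i =>
    letI := gH i; letI := tH i
    @aux9 (H i) _ _ (hTG i) (hMet i)
  choose V hV1 hV2 hV3 using hVex
  let N : Subgroup G :=
  { carrier := {x : G | ∀ i, π i x = 1}
    one_mem' := fun i => map_one (π i)
    mul_mem' := fun {a b} ha hb i => by rw [map_mul, ha i, hb i, one_mul]
    inv_mem' := fun {a} ha i => by rw [map_inv, ha i, inv_one] }
  have hmemN : ∀ x : G, x ∈ N ↔ ∀ i, π i x = 1 := fun x => Iff.rfl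
  have hanti : ∀ i, ∀ {m n : ℕ}, m ≤ n → V i n ⊆ V i m := by
    intro i m n hmn
    induction n with
    | zero => rw [Nat.le_zero.mp hmn]
    | succ n ih =>
      rcases Nat.lt_or_ge m (n+1) with h | h
      · intro a ha
        have : a ∈ V i n := hV2 i n ⟨a, ha, 1, (hV1 i (n+1)).2.1, mul_one a⟩
        exact ih (Nat.lt_succ_iff.mp h) this
      · rw [Nat.le_antisymm hmn h]
  refine ⟨N, ?_, ?_, ?_⟩
  · constructor
    intro x hx g i
    rw [map_mul, map_mul, hx i, mul_one, map_inv, mul_inv_cancel]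
  · refine ⟨fun n => ⋂ i ∈ Finset.range (n+1), π i ⁻¹' (V i n), ?_, ?_, ?_⟩
    · intro n
      refine ⟨isOpen_biInter_finset fun i _ => (hV1 i n).1.preimage (hπc i), ?_, ?_⟩
      · exact Set.mem_iInter₂.2 fun i _ => by
          simp only [Set.mem_preimage, map_one]; exact (hV1 i n).2.1
      · ext x
        rw [Set.mem_inv]
        simp only [Set.mem_iInter, Set.mem_preimage]
        have h : ∀ (i : ℕ) (a : H i), a⁻¹ ∈ V i n ↔ a ∈ V i n := by
          intro i a
          conv_rhs => rw [← (hV1 i n).2.2]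
          exact (Set.mem_inv).symm
        constructor
        · intro hx i hi
          have := hx i hi
          rw [map_inv] at this
          exact (h i _).1 this
        · intro hx i hi
          rw [map_inv]
          exact (h i _).2 (hx i hi)
    · intro n z hz
      obtain ⟨x, hx, y, hy, rfl⟩ := hz
      simp only [Set.mem_iInter, Set.mem_preimage, Finset.mem_range] at hx hy ⊢
      intro i hi
      have hx' := hx i (Nat.lt_succ_of_lt hi)
      have hy' := hy i (Nat.lt_succ_of_lt hi)
      exact hV2 i n ⟨_, hx', _, hy', (map_mul (π i) x y).symm⟩
    · ext x
      simp only [SetLike.mem_coe, hmemN, Set.mem_iInter, Set.mem_preimage,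
        Finset.mem_range]
      constructor
      · intro hx n i _
        rw [hx i]
        exact (hV1 i n).2.1
      · intro hx i
        have hall : ∀ n, π i x ∈ V i n := by
          intro n
          have := hx (max i n) i (Nat.lt_succ_of_le (le_max_left i n))
          exact hanti i (le_max_right i n) this
        have : π i x ∈ ⋂ n, V i n := Set.mem_iInter.2 hall
        rw [hV3 i] at this
        exact this
  · intro g x hx
    by_contra hne
    obtain ⟨q, m, hq1, hq2⟩ := sep_rat9 (f g) (f (g * x)) (fun h => hne h.symm)
    set i := e (q, m) with hi
    have hsymm : e.symm i = (q, m) := Equiv.symm_apply_apply e (q, m)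
    have hgW : g ∈ W i := by
      show dist (f g) (((e.symm i).1 : ℝ)) < 1/(((e.symm i).2 : ℝ)+1)
      rw [hsymm]
      exact hq1
    have hπeq : π i (g * x) = π i g := by
      rw [map_mul, hx i, mul_one]
    have : g * x ∈ ⇑(π i) ⁻¹' (⇑(π i) '' W i) := ⟨g, hgW, hπeq.symm⟩
    rw [hπsat i] at this
    have : dist (f (g * x)) (((e.symm i).1 : ℝ)) < 1/(((e.symm i).2 : ℝ)+1) := this
    rw [hsymm] at this
    exact hq2 this
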